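/- Let β ≥ 1 and 0 < α < 1/3, and define h_α(y) = β y³ − (2β + 1) y² + (β + 2) y − 1 + α (y² + β y). Then h_α has exactly one zero y_* in the open interval (0, 1), and h_α'(y_*) > 0. -/

import Mathlib

noncomputable section

/-- For β ≥ 1 and 0 < α < 1/3, the cubic
h_α(y) = βy³ − (2β+1)y² + (β+2)y − 1 + α(y² + βy) has exactly one zero y_* in
(0,1), and h_α'(y_*) > 0. -/
theorem cubic_unique_zero (α β : ℝ) (hα : 0 < α) (hα' : α < 1 / 3) (hβ : 1 ≤ β) :
    ∃ ys : ℝ, ys ∈ Set.Ioo (0 : ℝ) 1 ∧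
      (β * ys ^ 3 - (2 * β + 1) * ys ^ 2 + (β + 2) * ys - 1
        + α * (ys ^ 2 + β * ys) = 0) ∧
      (∀ y ∈ Set.Ioo (0 : ℝ) 1,
        β * y ^ 3 - (2 * β + 1) * y ^ 2 + (β + 2) * y - 1
          + α * (y ^ 2 + β * y) = 0 → y = ys) ∧
      0 < deriv (fun y => β * y ^ 3 - (2 * β + 1) * y ^ 2 + (β + 2) * y - 1
          + α * (y ^ 2 + β * y)) ys := by
  have hβ0 : (0:ℝ) < β := lt_of_lt_of_le one_pos hβ
  set H : ℝ → ℝ := fun y => β * y ^ 3 - (2 * β + 1) * y ^ 2 + (β + 2) * y - 1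
      + α * (y ^ 2 + β * y) with hHdef
  set F : ℝ → ℝ := fun y => β * y ^ 2 - (2 * β + 1) * y + (β + 2)
      + α * (y + β) - 1 / y with hFdef
  set c : ℝ := 1 / β with hcdef
  have hc : (0:ℝ) < c := by positivity
  have hc1 : c ≤ 1 := by rw [hcdef, div_le_one hβ0]; exact hβ
  have hHF : ∀ y : ℝ, y ≠ 0 → H y = y * F y := by
    intro y hy
    simp only [hHdef, hFdef]
    field_simp
    ring
  have hHcont : Continuous H := by
    simp only [hHdef]; fun_prop
  have hH0 : H 0 = -1 := by simp [hHdef]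
  have hHcpos : 0 < H c := by
    have h1 : H c = α * (1 / β ^ 2 + 1) := by
      simp only [hHdef, hcdef]
      field_simp
      ring
    rw [h1]; positivity
  -- existence of a root in (0, c)
  obtain ⟨ys, hys, hHys⟩ : ∃ ys ∈ Set.Ioo (0:ℝ) c, H ys = 0 := by
    have h0mem : (0:ℝ) ∈ Set.Ioo (H 0) (H c) := by
      rw [hH0]; exact ⟨by norm_num, hHcpos⟩
    obtain ⟨ys, hmem, heq⟩ := intermediate_value_Ioo (le_of_lt hc) hHcont.continuousOn h0mem
    exact ⟨ys, hmem, heq⟩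
  have hys0 : 0 < ys := hys.1
  have hysc : ys < c := hys.2
  have hys1 : ys < 1 := lt_of_lt_of_le hysc hc1
  -- every root in (0,1) satisfies y < c
  have root_lt : ∀ y ∈ Set.Ioo (0:ℝ) 1, H y = 0 → y < c := by
    intro y hy hroot
    by_contra hcon
    push_neg at hcon
    have h1 : 1 ≤ β * y := by
      rw [hcdef, div_le_iff₀ hβ0] at hcon
      linarith [hcon]
    have hid : H y = (y - 1) ^ 2 * (β * y - 1) + α * (y * (y + β)) := by
      simp only [hHdef]; ring
    have h2 : 0 ≤ (y - 1) ^ 2 * (β * y - 1) :=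
      mul_nonneg (sq_nonneg _) (by linarith)
    have h3 : 0 < α * (y * (y + β)) := by
      have : 0 < y * (y + β) := mul_pos hy.1 (by linarith [hy.1])
      positivity
    rw [hid] at hroot
    linarith
  -- derivative of H
  have hasDerivH : ∀ y : ℝ, HasDerivAt H
      (3 * β * y ^ 2 - (4 * β + 2) * y + (β + 2) + α * (2 * y + β)) y := by
    intro y
    have h3 : HasDerivAt (fun y : ℝ => y ^ 3) (3 * y ^ 2) y := by
      simpa using hasDerivAt_pow 3 y
    have h2 : HasDerivAt (fun y : ℝ => y ^ 2) (2 * y) y := by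
      simpa using hasDerivAt_pow 2 y
    have h1 : HasDerivAt (fun y : ℝ => y) 1 y := hasDerivAt_id y
    have hD := ((((h3.const_mul β).sub (h2.const_mul (2 * β + 1))).add
      (h1.const_mul (β + 2))).sub_const 1).add
      ((h2.add (h1.const_mul β)).const_mul α)
    exact hD.congr_deriv (by ring)
  -- at a root y in (0,c), the derivative is positive
  have deriv_pos : ∀ y : ℝ, 0 < y → y < c → H y = 0 →
      0 < 3 * β * y ^ 2 - (4 * β + 2) * y + (β + 2) + α * (2 * y + β) := by
    intro y hy0 hyc hroot
    have hby : β * y < 1 := by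
      rw [hcdef, lt_div_iff₀ hβ0] at hyc
      linarith
    have hy1 : y < 1 := lt_of_lt_of_le hyc hc1
    have key : y * (3 * β * y ^ 2 - (4 * β + 2) * y + (β + 2) + α * (2 * y + β))
        = (1 - y) * (1 + y - 2 * β * y ^ 2) + α * y ^ 2 := by
      have h0 : β * y ^ 3 - (2 * β + 1) * y ^ 2 + (β + 2) * y - 1
          + α * (y ^ 2 + β * y) = 0 := hroot
      linear_combination h0
    have hq : 0 < 1 + y - 2 * β * y ^ 2 := by nlinarith
    have hpos : 0 < (1 - y) * (1 + y - 2 * β * y ^ 2) + α * y ^ 2 := by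
      have := mul_pos (by linarith : (0:ℝ) < 1 - y) hq
      nlinarith [sq_nonneg y]
    nlinarith [key, hpos, hy0]
  -- F is strictly concave on Ioc 0 c
  have hFderiv : ∀ y : ℝ, y ≠ 0 →
      HasDerivAt F (2 * β * y - (2 * β + 1) + α + 1 / y ^ 2) y := by
    intro y hy
    have hinv : HasDerivAt (fun y : ℝ => 1 / y) (-(1 / y ^ 2)) y := by
      simpa [one_div] using hasDerivAt_inv hy
    have h2 : HasDerivAt (fun y : ℝ => y ^ 2) (2 * y) y := by
      simpa using hasDerivAt_pow 2 y
    have h1 : HasDerivAt (fun y : ℝ => y) 1 y := hasDerivAt_id y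
    have hD := ((((h2.const_mul β).sub (h1.const_mul (2 * β + 1))).add_const (β + 2)).add
      ((h1.add_const β).const_mul α)).sub hinv
    exact hD.congr_deriv (by ring)
  have hF2 : ∀ x ∈ Set.Ioo (0:ℝ) c, deriv^[2] F x < 0 := by
    intro x hx
    have hx0 : (0:ℝ) < x := hx.1
    have hEq : deriv F =ᶠ[nhds x] fun y => 2 * β * y - (2 * β + 1) + α + 1 / y ^ 2 := by
      have hmem : Set.Ioi (0:ℝ) ∈ nhds x := Ioi_mem_nhds hx0
      filter_upwards [hmem] with y hy
      exact (hFderiv y (ne_of_gt hy)).deriv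
    have hGderiv : HasDerivAt (fun y : ℝ => 2 * β * y - (2 * β + 1) + α + 1 / y ^ 2)
        (2 * β - 2 / x ^ 3) x := by
      have h1 : HasDerivAt (fun y : ℝ => y) 1 x := hasDerivAt_id x
      have h2 : HasDerivAt (fun y : ℝ => y ^ 2) (2 * x) x := by
        simpa using hasDerivAt_pow 2 x
      have hinv2 : HasDerivAt (fun y : ℝ => (y ^ 2)⁻¹) (-(2 * x) / (x ^ 2) ^ 2) x :=
        h2.inv (by positivity)
      have hD := (((h1.const_mul (2 * β)).sub_const (2 * β + 1)).add_const α).add hinv2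
      rw [show (fun y : ℝ => 2 * β * y - (2 * β + 1) + α + 1 / y ^ 2) = ((fun x => 2 * β * x - (2 * β + 1) + α) + fun y => (y ^ 2)⁻¹) by funext y; simp [one_div]]
      have hx0' : x ≠ 0 := ne_of_gt hx0
      exact hD.congr_deriv (by field_simp; ring)
    have : deriv^[2] F x = 2 * β - 2 / x ^ 3 := by
      have : deriv (deriv F) x = deriv
          (fun y : ℝ => 2 * β * y - (2 * β + 1) + α + 1 / y ^ 2) x := hEq.deriv_eq
      have h2it : deriv^[2] F x = deriv (deriv F) x := rfl
      rw [h2it, this, hGderiv.deriv]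
    rw [this]
    have hxc : x < c := hx.2
    have hbx : β * x < 1 := by
      rw [hcdef, lt_div_iff₀ hβ0] at hxc
      linarith
    have hx1 : x < 1 := lt_of_lt_of_le hxc hc1
    have hx3 : 0 < x ^ 3 := by positivity
    rw [sub_neg, lt_div_iff₀ hx3]
    nlinarith [mul_pos hx0 hx0, mul_pos (mul_pos hx0 hx0) hx0]
  have hFcont : ContinuousOn F (Set.Ioc (0:ℝ) c) := fun x hx =>
    ((hFderiv x (ne_of_gt hx.1)).continuousAt).continuousWithinAt
  have hconc : StrictConcaveOn ℝ (Set.Ioc (0:ℝ) c) F :=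
    strictConcaveOn_of_deriv2_neg (convex_Ioc _ _) hFcont
      (by rwa [interior_Ioc])
  have hFc : 0 < F c := by
    have h1 : H c = c * F c := hHF c (ne_of_gt hc)
    nlinarith [hHcpos, hc]
  -- uniqueness
  have uniq : ∀ y ∈ Set.Ioo (0:ℝ) 1,
      β * y ^ 3 - (2 * β + 1) * y ^ 2 + (β + 2) * y - 1 + α * (y ^ 2 + β * y) = 0
      → y = ys := by
    intro y hy hroot
    have hroot' : H y = 0 := hroot
    by_contra hne
    have hyc : y < c := root_lt y hy hroot'
    have hy0 : 0 < y := hy.1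
    set a := min y ys with hadef
    set b := max y ys with hbdef
    have ha0 : 0 < a := lt_min hy0 hys0
    have hbc : b < c := max_lt hyc hysc
    have hab : a < b := min_lt_max.mpr hne
    have hFa : F a = 0 := by
      have hHa : H a = 0 := by
        rcases min_choice y ys with h | h
        · rw [hadef, h]; exact hroot'
        · rw [hadef, h]; exact hHys
      have := hHF a (ne_of_gt ha0)
      rw [hHa] at this
      rcases mul_eq_zero.mp this.symm with h | h
      · exact absurd h (ne_of_gt ha0)
      · exact h
    have hFb : F b = 0 := by
      have hHb : H b = 0 := by
        rcases max_choice y ys with h | h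
        · rw [hbdef, h]; exact hroot'
        · rw [hbdef, h]; exact hHys
      have := hHF b (ne_of_gt (lt_trans ha0 hab))
      rw [hHb] at this
      rcases mul_eq_zero.mp this.symm with h | h
      · exact absurd h (ne_of_gt (lt_trans ha0 hab))
      · exact h
    have hmema : a ∈ Set.Ioc (0:ℝ) c := ⟨ha0, le_of_lt (lt_trans hab hbc)⟩
    have hmemc : c ∈ Set.Ioc (0:ℝ) c := ⟨hc, le_refl c⟩
    have hac : a ≠ c := ne_of_lt (lt_trans hab hbc)
    have hlpos : 0 < (c - b) / (c - a) := by
      apply div_pos <;> linarith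
    have hmpos : 0 < (b - a) / (c - a) := by
      apply div_pos <;> linarith
    have hca : c - a ≠ 0 := by
      intro h; exact hac (by linarith)
    have hsum : (c - b) / (c - a) + (b - a) / (c - a) = 1 := by
      rw [← add_div, show c - b + (b - a) = c - a by ring, div_self hca]
    have hcomb := hconc.2 hmema hmemc hac hlpos hmpos hsum
    have hptr : ((c - b) / (c - a)) • a + ((b - a) / (c - a)) • c = b := by
      simp only [smul_eq_mul]
      rw [div_mul_eq_mul_div, div_mul_eq_mul_div, ← add_div,
        show (c - b) * a + (b - a) * c = b * (c - a) by ring,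
        mul_div_assoc, div_self hca, mul_one]
    rw [hptr, hFa, hFb, smul_zero, zero_add, smul_eq_mul] at hcomb
    exact absurd hcomb (not_lt.mpr (le_of_lt (mul_pos hmpos hFc)))
  -- conclusion
  refine ⟨ys, ⟨hys0, hys1⟩, hHys, uniq, ?_⟩
  rw [(hasDerivH ys).deriv]
  exact deriv_pos ys hys0 hysc hHys
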